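/- Let a(z) and c(z) be rational functions, let b(z) be a meromorphic function on ℂ having at most finitely many poles, and let w be a meromorphic function on ℂ of finite order satisfying the difference Riccati equation w(z+1) = (a(z)w(z) + b(z))/(w(z) − c(z)). Then there is a finite set F ⊂ ℂ such that at every pole ẑ ∉ F of w, of multiplicity k, one has w(z+1) = a(z) + O((z−ẑ)^k) and w(z−1) = c(z−1) + O((z−ẑ)^k) for all z in a neighborhood of ẑ. -/

import Mathlib

open Filter MeasureTheory Topology

noncomputable section

/-- The Nevanlinna proximity function `m(r, f)` of a function `f : ℂ → ℂ`. -/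
def nevProx (f : ℂ → ℂ) (r : ℝ) : ℝ :=
  (2 * Real.pi)⁻¹ * ∫ θ in (0:ℝ)..(2 * Real.pi),
      Real.log (max 1 ‖f ((r : ℂ) * Complex.exp ((θ : ℂ) * Complex.I))‖)

open Classical in
/-- The multiplicity of the pole of `f` at `z` (`0` if `f` does not have a pole there). -/
def poleOrder (f : ℂ → ℂ) (z : ℂ) : ℕ :=
  if h : MeromorphicAt f z then (-((meromorphicOrderAt f z).untopD 0)).toNat else 0

/-- The unintegrated counting function: the number of poles of `f` of modulus at most `t`,
counted with multiplicity. -/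
def poleCount (f : ℂ → ℂ) (t : ℝ) : ℝ :=
  ∑' z : ℂ, if ‖z‖ ≤ t then (poleOrder f z : ℝ) else 0

/-- The integrated Nevanlinna counting function `N(r, f)`. -/
def nevCount (f : ℂ → ℂ) (r : ℝ) : ℝ :=
  (∫ t in (0:ℝ)..r, (poleCount f t - poleCount f 0) / t) + poleCount f 0 * Real.log r

/-- The Nevanlinna characteristic function `T(r, f) = m(r, f) + N(r, f)`. -/
def nevChar (f : ℂ → ℂ) (r : ℝ) : ℝ := nevProx f r + nevCount f r

/-- The order of growth `ρ(f) = limsup_{r → ∞} log T(r, f) / log r` (as an extended real). -/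
def growthOrder (f : ℂ → ℂ) : EReal :=
  Filter.limsup (fun r : ℝ => ((Real.log (nevChar f r) / Real.log r : ℝ) : EReal))
    Filter.atTop

/-- `f` has finite order of growth. -/
def FiniteOrder (f : ℂ → ℂ) : Prop := growthOrder f < ⊤

/-- A set `E ⊆ ℝ` has finite logarithmic measure: `∫_{E ∩ [1, ∞)} dt/t < ∞`. -/
def FiniteLogMeasure (E : Set ℝ) : Prop :=
  ∫⁻ t in E ∩ Set.Ici 1, ENNReal.ofReal t⁻¹ < ⊤

/-- `u(r) = o(v(r))` as `r → ∞` outside a set of finite logarithmic measure. -/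
def SmallOOut (u v : ℝ → ℝ) : Prop :=
  ∃ E : Set ℝ, FiniteLogMeasure E ∧
    ∀ ε : ℝ, 0 < ε → ∀ᶠ r in Filter.atTop, r ∉ E → |u r| ≤ ε * v r

/-- `a` is a small function with respect to `w`: `T(r, a) = S(r, w)`. -/
def SmallFn (a w : ℂ → ℂ) : Prop := SmallOOut (nevChar a) (nevChar w)

/-- `f` is not identically zero as a meromorphic function (it is nonzero away from any
countable exceptional set). -/
def NotIdZero (f : ℂ → ℂ) : Prop := ¬ ({z : ℂ | f z ≠ 0}.Countable)

/-- `f` is not constant as a meromorphic function. -/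
def NonConstant (f : ℂ → ℂ) : Prop := ¬ ∃ cst : ℂ, {z : ℂ | f z ≠ cst}.Countable

/-- `f` is a rational function: a quotient of two polynomials (up to junk values at the
finitely many poles). -/
def IsRationalFn (f : ℂ → ℂ) : Prop :=
  ∃ p q : Polynomial ℂ, q ≠ 0 ∧ {z : ℂ | f z * q.eval z ≠ p.eval z}.Finite

/-- `f` coincides with a rational function as a meromorphic function (i.e. away from a
countable exceptional set). -/
def IsRationalMero (f : ℂ → ℂ) : Prop :=
  ∃ p q : Polynomial ℂ, q ≠ 0 ∧ {z : ℂ | f z * q.eval z ≠ p.eval z}.Countable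

/-- `f` has a pole at `z₀`. -/
def IsPole (f : ℂ → ℂ) (z₀ : ℂ) : Prop :=
  Filter.Tendsto (fun z => ‖f z‖) (nhdsWithin z₀ {z₀}ᶜ) Filter.atTop

/-- `f` has a pole of multiplicity `k` at `z₀`: its Laurent expansion at `z₀` begins at
order `-k`. -/
def PoleOfOrder (f : ℂ → ℂ) (k : ℕ) (z₀ : ℂ) : Prop :=
  ∃ g : ℂ → ℂ, AnalyticAt ℂ g z₀ ∧ g z₀ ≠ 0 ∧
    ∀ᶠ z in nhdsWithin z₀ {z₀}ᶜ, f z = g z / (z - z₀) ^ k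

/-- `f` has a zero of multiplicity `k` at `z₀`: its Laurent expansion at `z₀` begins at
order `k`. -/
def ZeroOfOrder (f : ℂ → ℂ) (k : ℕ) (z₀ : ℂ) : Prop :=
  ∃ g : ℂ → ℂ, AnalyticAt ℂ g z₀ ∧ g z₀ ≠ 0 ∧
    ∀ᶠ z in nhdsWithin z₀ {z₀}ᶜ, f z = (z - z₀) ^ k * g z

/-- `w` is a meromorphic function on `ℂ` whose representative `ℂ → ℂ` is honest: it is
analytic away from its poles (no junk values). -/
def NormalizedMero (w : ℂ → ℂ) : Prop :=
  MeromorphicOn w Set.univ ∧ ∀ z : ℂ, ¬ IsPole w z → AnalyticAt ℂ w z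

/-- The data of a difference polynomial in `w(z), w(z + c 0), …, w(z + c (n-1))`:
the shifts `c`, a finite set `I` of multi-indexes, and the coefficient functions `a`. -/
structure DiffPoly (n : ℕ) where
  c : Fin n → ℂ
  I : Finset (Fin (n + 1) → ℕ)
  a : (Fin (n + 1) → ℕ) → ℂ → ℂ

namespace DiffPoly

variable {n : ℕ}

/-- The shifts, including the trivial shift `0` as the `0`-th one. -/
def shift (P : DiffPoly n) : Fin (n + 1) → ℂ := Fin.cases 0 P.c

/-- The value `P(z, w) = ∑_{λ ∈ I} a_λ(z) w(z)^{λ 0} w(z + c 0)^{λ 1} ⋯ w(z + c (n-1))^{λ n}`. -/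
def eval (P : DiffPoly n) (w : ℂ → ℂ) (z : ℂ) : ℂ :=
  ∑ lam ∈ P.I, P.a lam z * ∏ j : Fin (n + 1), w (z + P.shift j) ^ lam j

/-- The total degree `deg_w(P) = max_{λ ∈ I} (λ_0 + ⋯ + λ_n)`. -/
def deg (P : DiffPoly n) : ℕ := P.I.sup fun lam => ∑ j, lam j

/-- `ord_0(P) = min_{λ ∈ I} λ_0`, the order of the zero of `P(z, x_0, …, x_n)` at `x_0 = 0`. -/
def ord0 (P : DiffPoly n) : ℕ := sInf {m : ℕ | ∃ lam ∈ P.I, lam 0 = m}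

/-- The weight `κ(P) = max_{λ ∈ I} (λ_1 + ⋯ + λ_n)`. -/
def weight (P : DiffPoly n) : ℕ := P.I.sup fun lam => ∑ j : Fin n, lam j.succ

/-- `P` is homogeneous: each term has the same nonzero total degree. -/
def Homogeneous (P : DiffPoly n) : Prop :=
  0 < P.deg ∧ ∀ lam ∈ P.I, (∑ j, lam j) = P.deg

end DiffPoly

/-- The value at `x` of the polynomial in one variable whose coefficients are the functions
`h 0, …, h d` evaluated at `z`. -/
def polyEval (h : ℕ → ℂ → ℂ) (d : ℕ) (z x : ℂ) : ℂ :=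
  ∑ k ∈ Finset.range (d + 1), h k z * x ^ k

/-- `H` and `Q`, as polynomials in one variable over the field of meromorphic functions,
have no common factors: away from a countable set of points `z` the complex polynomials
`H(z, ·)` and `Q(z, ·)` have no common root. -/
def NoCommonFactors (h : ℕ → ℂ → ℂ) (dH : ℕ) (q : ℕ → ℂ → ℂ) (dQ : ℕ) : Prop :=
  {z : ℂ | ∃ x : ℂ, polyEval h dH z x = 0 ∧ polyEval q dQ z x = 0}.Countable

end


open Filter Topology

private lemma poly_analyticAt (p : Polynomial ℂ) (x : ℂ) :
    AnalyticAt ℂ (fun z => p.eval z) x :=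
  p.differentiable.analyticAt x

private lemma rat_analytic {a : ℂ → ℂ}
    (ha : ∃ p q : Polynomial ℂ, q ≠ 0 ∧ {z : ℂ | a z * q.eval z ≠ p.eval z}.Finite) :
    ∃ E : Set ℂ, E.Finite ∧ ∀ x ∉ E, AnalyticAt ℂ a x := by
  obtain ⟨p, q, hq, hfin⟩ := ha
  refine ⟨{z | a z * q.eval z ≠ p.eval z} ∪ {z | q.IsRoot z},
    hfin.union (q.finite_setOf_isRoot hq), ?_⟩
  intro x hx
  have hqx : q.eval x ≠ 0 := fun h => hx (Set.mem_union_right _ h)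
  have hnb : ({z : ℂ | a z * q.eval z ≠ p.eval z} ∪ {z | q.IsRoot z})ᶜ ∈ 𝓝 x :=
    ((hfin.union (q.finite_setOf_isRoot hq)).isClosed.isOpen_compl).mem_nhds hx
  have heq : (fun z => p.eval z / q.eval z) =ᶠ[𝓝 x] a := by
    filter_upwards [hnb] with z hz
    simp only [Set.mem_compl_iff, Set.mem_union, Set.mem_setOf_eq, not_or, not_not] at hz
    exact (div_eq_iff hz.2).mpr hz.1.symm
  exact ((poly_analyticAt p x).div (poly_analyticAt q x) hqx).congr heq

private lemma mero_shift {w : ℂ → ℂ} (hw : MeromorphicOn w Set.univ) (t x : ℂ) :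
    MeromorphicAt (fun z => w (z + t)) x := by
  obtain ⟨n, hn⟩ := hw (x + t) (Set.mem_univ _)
  refine ⟨n, ?_⟩
  have h1 : AnalyticAt ℂ (fun z : ℂ => z + t) x :=
    (analyticAt_id (𝕜 := ℂ)).add analyticAt_const
  have h2 : AnalyticAt ℂ ((fun u : ℂ => (u - (x + t)) ^ n • w u) ∘ (fun z : ℂ => z + t)) x :=
    hn.comp_of_eq h1 rfl
  simp only [Function.comp_def] at h2
  have h3 : (fun z : ℂ => (z - x) ^ n • w (z + t)) =
      fun z : ℂ => (z + t - (x + t)) ^ n • w (z + t) := by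
    funext z; congr 2; ring
  rw [h3]; exact h2

private lemma mero_ev_zero {f : ℂ → ℂ} {x : ℂ} (hf : MeromorphicAt f x)
    (h : {z : ℂ | f z ≠ 0}.Countable) : ∀ᶠ z in 𝓝[≠] x, f z = 0 := by
  rcases eq_or_ne (meromorphicOrderAt f x) ⊤ with h0 | h0
  · exact meromorphicOrderAt_eq_top_iff.mp h0
  obtain ⟨n, hn⟩ := WithTop.ne_top_iff_exists.mp h0
  obtain ⟨g, hg, hgx, hfg⟩ := (meromorphicOrderAt_eq_int_iff (n := n) hf).mp hn.symm
  exfalso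
  have hg' : ∀ᶠ z in 𝓝 x, g z ≠ 0 := hg.continuousAt.eventually_ne hgx
  have hne : ∀ᶠ z in 𝓝[≠] x, f z ≠ 0 := by
    filter_upwards [hfg, hg'.filter_mono nhdsWithin_le_nhds, self_mem_nhdsWithin]
      with z h1 h2 h3
    rw [h1]
    exact smul_ne_zero (zpow_ne_zero _ (sub_ne_zero.mpr h3)) h2
  obtain ⟨ε, hε, hball⟩ := Metric.mem_nhdsWithin_iff.mp hne
  have hd : Dense ({z : ℂ | f z ≠ 0} ∪ {x})ᶜ :=
    (h.union (Set.countable_singleton x)).dense_compl ℂ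
  have hopen : IsOpen (Metric.ball x ε ∩ {x}ᶜ) :=
    Metric.isOpen_ball.inter isClosed_singleton.isOpen_compl
  have hne' : (Metric.ball x ε ∩ {x}ᶜ).Nonempty := by
    refine ⟨x + (ε / 2 : ℝ), ?_, ?_⟩
    · rw [Metric.mem_ball, Complex.dist_eq, add_sub_cancel_left, Complex.norm_real, Real.norm_eq_abs,
        abs_of_pos (by linarith)]
      linarith
    · simp only [Set.mem_compl_iff, Set.mem_singleton_iff, add_eq_left,
        Complex.ofReal_eq_zero]
      intro hcon
      norm_num at hcon
      linarith
  obtain ⟨y, hy1, hy2⟩ := hd.inter_open_nonempty _ hopen hne'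
  have hfy : f y ≠ 0 := hball hy1
  simp only [Set.mem_compl_iff, Set.mem_union, Set.mem_setOf_eq, not_or, not_not] at hy2
  exact hfy hy2.1

/-- second half of the proof of Theorem 2.1: at all but finitely many
poles `ẑ` (of multiplicity `k`) of a finite-order meromorphic solution of the difference
Riccati equation `w(z+1) = (a w + b)/(w - c)`, one has `w(z+1) = a(z) + O((z-ẑ)^k)` and
`w(z-1) = c(z-1) + O((z-ẑ)^k)` near `ẑ`. -/
theorem riccati_pole_expansion (a c : ℂ → ℂ)
    (ha : IsRationalFn a) (hc : IsRationalFn c)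
    (b : ℂ → ℂ) (hbMero : MeromorphicOn b Set.univ)
    (hbPoles : {z : ℂ | ¬ AnalyticAt ℂ b z}.Finite)
    (w : ℂ → ℂ) (hw : NormalizedMero w) (hword : FiniteOrder w)
    (heq : {z : ℂ | w (z + 1) * (w z - c z) ≠ a z * w z + b z}.Countable) :
    ∃ F : Set ℂ, F.Finite ∧ ∀ zh : ℂ, zh ∉ F → ∀ k : ℕ, 0 < k → PoleOfOrder w k zh →
      ∃ U ∈ nhds zh, ∃ M : ℝ, ∀ z ∈ U, z ≠ zh →
        ‖w (z + 1) - a z‖ ≤ M * ‖z - zh‖ ^ k ∧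
        ‖w (z - 1) - c (z - 1)‖ ≤ M * ‖z - zh‖ ^ k := by
  obtain ⟨Ea, hEaf, hA⟩ := rat_analytic ha
  obtain ⟨Ec, hEcf, hC⟩ := rat_analytic hc
  set Eb : Set ℂ := {z : ℂ | ¬ AnalyticAt ℂ b z} with hEbdef
  refine ⟨(Ea ∪ Ec ∪ Eb) ∪ (fun z => z + 1) '' (Ea ∪ Ec ∪ Eb), ?_, ?_⟩
  · exact ((hEaf.union hEcf).union hbPoles).union
      (((hEaf.union hEcf).union hbPoles).image _)
  intro zh hF k hk hpole
  obtain ⟨g, hg, hgz0, hgeq⟩ := hpole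
  -- analyticity of the coefficients at `zh` and `zh - 1`
  have haz : AnalyticAt ℂ a zh := hA zh fun h =>
    hF (Set.mem_union_left _ (Set.mem_union_left _ (Set.mem_union_left _ h)))
  have hcz : AnalyticAt ℂ c zh := hC zh fun h =>
    hF (Set.mem_union_left _ (Set.mem_union_left _ (Set.mem_union_right _ h)))
  have hbz : AnalyticAt ℂ b zh := not_not.mp fun h =>
    hF (Set.mem_union_left _ (Set.mem_union_right _ h))
  have ha1 : AnalyticAt ℂ a (zh - 1) := hA _ fun h =>
    hF (Set.mem_union_right _ ⟨zh - 1, Set.mem_union_left _ (Set.mem_union_left _ h), by ring⟩)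
  have hc1 : AnalyticAt ℂ c (zh - 1) := hC _ fun h =>
    hF (Set.mem_union_right _ ⟨zh - 1, Set.mem_union_left _ (Set.mem_union_right _ h), by ring⟩)
  have hb1 : AnalyticAt ℂ b (zh - 1) := not_not.mp fun h =>
    hF (Set.mem_union_right _ ⟨zh - 1, Set.mem_union_right _ h, by ring⟩)
  -- the meromorphic function expressing the equation
  set φ : ℂ → ℂ := fun z => w (z + 1) * (w z - c z) - (a z * w z + b z) with hφdef
  have hφcnt : {z : ℂ | φ z ≠ 0}.Countable := by
    apply heq.mono
    intro z hz
    exact sub_ne_zero.mp hz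
  have hwm : ∀ x : ℂ, MeromorphicAt w x := fun x => hw.1 x (Set.mem_univ x)
  have hws : ∀ x : ℂ, MeromorphicAt (fun z => w (z + 1)) x := fun x => mero_shift hw.1 1 x
  have hφm : ∀ x : ℂ, AnalyticAt ℂ a x → AnalyticAt ℂ c x → AnalyticAt ℂ b x →
      MeromorphicAt φ x := fun x hax hcx hbx =>
    ((hws x).mul ((hwm x).sub hcx.meromorphicAt)).sub
      ((hax.meromorphicAt.mul (hwm x)).add hbx.meromorphicAt)
  have he1 : ∀ᶠ z in 𝓝[≠] zh, φ z = 0 := mero_ev_zero (hφm zh haz hcz hbz) hφcnt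
  have he2 : ∀ᶠ z in 𝓝[≠] (zh - 1), φ z = 0 := mero_ev_zero (hφm _ ha1 hc1 hb1) hφcnt
  have hmaps : Filter.Tendsto (fun z : ℂ => z - 1) (𝓝[≠] zh) (𝓝[≠] (zh - 1)) := by
    apply tendsto_nhdsWithin_of_tendsto_nhds_of_eventually_within
    · exact ((continuous_id.sub continuous_const).tendsto zh).mono_left nhdsWithin_le_nhds
    · filter_upwards [self_mem_nhdsWithin] with z hz
      simp only [Set.mem_compl_iff, Set.mem_singleton_iff] at hz ⊢
      exact fun hcon => hz (by linear_combination hcon)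
  have he2' : ∀ᶠ z in 𝓝[≠] zh, φ (z - 1) = 0 := hmaps.eventually he2
  -- constants
  set m0 : ℝ := ‖g zh‖ with hm0def
  have hm0 : 0 < m0 := norm_pos_iff.mpr hgz0
  set Ca : ℝ := ‖c zh‖ + 1 with hCadef
  set Ca' : ℝ := ‖a (zh - 1)‖ + 1 with hCa'def
  set C0 : ℝ := max Ca Ca' with hC0def
  have hC0 : 0 < C0 := lt_of_lt_of_le (by positivity) (le_max_left _ _)
  set B1 : ℝ := ‖b zh + a zh * c zh‖ + 1 with hB1def
  set B2 : ℝ := ‖b (zh - 1) + a (zh - 1) * c (zh - 1)‖ + 1 with hB2def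
  set B : ℝ := max B1 B2 with hBdef
  have hB : 0 < B := lt_of_lt_of_le (by positivity) (le_max_left _ _)
  set ε : ℝ := m0 / (4 * C0) with hεdef
  have hε : 0 < ε := by positivity
  set δ : ℝ := min 1 ε with hδdef
  have hδ : 0 < δ := lt_min one_pos hε
  -- continuity eventualities
  have hsub1 : ContinuousAt (fun z : ℂ => z - 1) zh := (continuous_id.sub continuous_const).continuousAt
  have hgev : ∀ᶠ z in 𝓝 zh, m0 / 2 < ‖g z‖ :=
    (continuous_norm.continuousAt.comp hg.continuousAt).eventually
      (eventually_gt_nhds (show m0 / 2 < (norm ∘ g) zh by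
        simp only [Function.comp_apply]; rw [← hm0def]; linarith))
  have hcev : ∀ᶠ z in 𝓝 zh, ‖c z‖ < Ca :=
    (continuous_norm.continuousAt.comp hcz.continuousAt).eventually
      (eventually_lt_nhds (lt_add_one _))
  have haev : ∀ᶠ z in 𝓝 zh, ‖a (z - 1)‖ < Ca' :=
    (continuous_norm.continuousAt.comp (ha1.continuousAt.comp_of_eq hsub1 rfl)).eventually
      (eventually_lt_nhds (lt_add_one _))
  have hB1ev : ∀ᶠ z in 𝓝 zh, ‖b z + a z * c z‖ < B1 :=
    (continuous_norm.continuousAt.comp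
      (hbz.continuousAt.add (haz.continuousAt.mul hcz.continuousAt))).eventually
      (eventually_lt_nhds (lt_add_one _))
  have hB2ev : ∀ᶠ z in 𝓝 zh, ‖b (z - 1) + a (z - 1) * c (z - 1)‖ < B2 :=
    (continuous_norm.continuousAt.comp
      (((hb1.continuousAt.add (ha1.continuousAt.mul hc1.continuousAt)).comp_of_eq hsub1 rfl))).eventually
      (eventually_lt_nhds (lt_add_one _))
  have hδev : ∀ᶠ z in 𝓝 zh, ‖z - zh‖ < δ := by
    filter_upwards [Metric.ball_mem_nhds zh hδ] with z hz
    rwa [Metric.mem_ball, Complex.dist_eq] at hz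
  rw [eventually_nhdsWithin_iff] at he1 he2' hgeq
  have main : ∀ᶠ z in 𝓝 zh, z ≠ zh →
      ‖w (z + 1) - a z‖ ≤ 4 * B / m0 * ‖z - zh‖ ^ k ∧
      ‖w (z - 1) - c (z - 1)‖ ≤ 4 * B / m0 * ‖z - zh‖ ^ k := by
    filter_upwards [he1, he2', hgeq, hgev, hcev, haev, hB1ev, hB2ev, hδev]
      with z H1 H2 Hw Hg Hc Ha HB1 HB2 Hδ hzne
    have hzmem : z ∈ ({zh}ᶜ : Set ℂ) := hzne
    set t : ℝ := ‖z - zh‖ ^ k with htdef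
    have hzzh : z - zh ≠ 0 := sub_ne_zero.mpr hzne
    have ht : 0 < t := pow_pos (norm_pos_iff.mpr hzzh) k
    have htle : t ≤ ε := by
      have h1 : ‖z - zh‖ ^ k ≤ ‖z - zh‖ ^ 1 :=
        pow_le_pow_of_le_one (norm_nonneg _)
          (le_trans Hδ.le (min_le_left _ _)) hk
      rw [pow_one] at h1
      exact le_trans h1 (le_trans Hδ.le (min_le_right _ _))
    have hwz : w z = g z / (z - zh) ^ k := Hw hzmem
    have habs : ‖w z‖ * t = ‖g z‖ := by
      rw [hwz, norm_div, norm_pow, htdef, div_mul_cancel₀]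
      exact ht.ne'
    -- the two algebraic identities
    have e1 : w (z + 1) * (w z - c z) = a z * w z + b z := sub_eq_zero.mp (H1 hzmem)
    have e2 : w z * (w (z - 1) - c (z - 1)) = a (z - 1) * w (z - 1) + b (z - 1) := by
      have h := sub_eq_zero.mp (H2 hzmem)
      rw [show z - 1 + 1 = z by ring] at h
      linear_combination h
    have key1 : (w (z + 1) - a z) * (w z - c z) = b z + a z * c z := by linear_combination e1
    have key2 : (w (z - 1) - c (z - 1)) * (w z - a (z - 1)) =
        b (z - 1) + a (z - 1) * c (z - 1) := by linear_combination e2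
    -- lower bound on |w z - x| for bounded x
    have hlow : ∀ x : ℂ, ‖x‖ ≤ C0 → m0 / (4 * t) ≤ ‖w z - x‖ := by
      intro x hx
      have h1 : ‖w z‖ - ‖x‖ ≤ ‖w z - x‖ := by
        have := norm_sub_norm_le (w z) x
        exact this
      have h2 : m0 / 2 ≤ ‖w z‖ * t := by rw [habs]; linarith
      have h3 : C0 * t ≤ m0 / 4 := by
        have := mul_le_mul_of_nonneg_left htle hC0.le
        rw [hεdef] at this
        calc C0 * t ≤ C0 * (m0 / (4 * C0)) := this
          _ = m0 / 4 := by field_simp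
      rw [div_le_iff₀ (by positivity : (0:ℝ) < 4 * t)]
      nlinarith [mul_nonneg (sub_nonneg.mpr h1) ht.le, mul_nonneg (sub_nonneg.mpr hx) ht.le,
        norm_nonneg (w z - x), norm_nonneg x]
    -- generic upper bound step
    have hup : ∀ X Y : ℝ, 0 ≤ X → m0 / (4 * t) ≤ Y → X * Y ≤ B → X ≤ 4 * B / m0 * t := by
      intro X Y hX hY hXY
      have hq : X * (m0 / (4 * t)) ≤ B := le_trans (mul_le_mul_of_nonneg_left hY hX) hXY
      have hq2 : X * m0 ≤ B * (4 * t) := by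
        have h := mul_le_mul_of_nonneg_right hq (by positivity : (0:ℝ) ≤ 4 * t)
        calc X * m0 = X * (m0 / (4 * t)) * (4 * t) := by field_simp
          _ ≤ B * (4 * t) := h
      rw [div_mul_eq_mul_div, le_div_iff₀ hm0]
      linarith
    constructor
    · refine hup _ (‖w z - c z‖) (norm_nonneg _)
        (hlow (c z) (le_trans Hc.le (le_max_left _ _))) ?_
      rw [← norm_mul, key1]
      exact le_trans HB1.le (le_max_left _ _)
    · refine hup _ (‖w z - a (z - 1)‖) (norm_nonneg _)
        (hlow (a (z - 1)) (le_trans Ha.le (le_max_right _ _))) ?_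
      rw [← norm_mul, key2]
      exact le_trans HB2.le (le_max_right _ _)
  obtain ⟨U, hU, hUp⟩ := main.exists_mem
  exact ⟨U, hU, 4 * B / m0, fun z hzU hzne => hUp z hzU hzne⟩
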